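/- Let X be a locally compact metric space, f : X → ℝⁿ a continuous map, and y₀ ∈ ℝⁿ such that the fiber f⁻¹{y₀} is totally disconnected. Then for any two distinct points x₁, x₂ ∈ f⁻¹{y₀} there exists ε₀ > 0 such that x₁ and x₂ lie in different connected components of f⁻¹(B(y₀, ε₀)); that is, x₂ ∉ U_{ε₀}(x₁). -/
import Mathlib


/-- Distinct points of a totally disconnected fiber are separated into different
components of `f⁻¹(B(y₀, ε₀))` for some `ε₀ > 0`. -/
theorem stmt_10 {X : Type*} [MetricSpace X] [LocallyCompactSpace X]
    (n : ℕ) (f : X → EuclideanSpace ℝ (Fin n)) (hf : Continuous f)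
    (y₀ : EuclideanSpace ℝ (Fin n))
    (hfiber : IsTotallyDisconnected (f ⁻¹' {y₀}))
    (x₁ x₂ : X) (hx₁ : f x₁ = y₀) (hx₂ : f x₂ = y₀) (hne : x₁ ≠ x₂) :
    ∃ ε₀ : ℝ, 0 < ε₀ ∧ x₂ ∉ connectedComponentIn (f ⁻¹' Metric.ball y₀ ε₀) x₁ := by
  classical
  set F : Set X := f ⁻¹' {y₀} with hF
  have hFclosed : IsClosed F := isClosed_singleton.preimage hf
  haveI : LocallyCompactSpace F := hFclosed.locallyCompactSpace
  haveI : TotallyDisconnectedSpace F := totallyDisconnectedSpace_subtype_iff.2 hfiber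
  have hx₁F : x₁ ∈ F := by simp [hF, hx₁]
  have hx₂F : x₂ ∈ F := by simp [hF, hx₂]
  set p₁ : F := ⟨x₁, hx₁F⟩ with hp₁
  set p₂ : F := ⟨x₂, hx₂F⟩ with hp₂
  have hpne : p₁ ∈ ({p₂}ᶜ : Set F) := by
    simp only [Set.mem_compl_iff, Set.mem_singleton_iff, hp₁, hp₂]
    exact fun h => hne (congrArg Subtype.val h)
  -- a compact neighborhood of p₁ inside {p₂}ᶜ
  obtain ⟨s, hs_comp, hxs, hs_sub⟩ :=
    exists_compact_subset isClosed_singleton.isOpen_compl hpne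
  -- a compact clopen set V ∋ p₁ inside interior s
  obtain ⟨V, hVclopen, hp₁V, hVsub⟩ :=
    loc_compact_Haus_tot_disc_of_zero_dim.mem_nhds_iff.1 (isOpen_interior.mem_nhds hxs)
  have hVclopen : IsClopen V := hVclopen
  have hVcomp : IsCompact V :=
    hs_comp.of_isClosed_subset hVclopen.isClosed (hVsub.trans interior_subset)
  have hp₂V : p₂ ∉ V := fun h => hs_sub (interior_subset (hVsub h)) rfl
  -- K and C in X
  set K : Set X := Subtype.val '' V with hK
  set C : Set X := Subtype.val '' (Vᶜ) with hC
  have hKcomp : IsCompact K := hVcomp.image continuous_subtype_val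
  have hCclosed : IsClosed C :=
    hFclosed.isClosedEmbedding_subtypeVal.isClosed_iff_image_isClosed.1
      hVclopen.isOpen.isClosed_compl
  have hKC : K ⊆ Cᶜ := by
    rintro x ⟨p, hpV, rfl⟩ ⟨q, hqV, hq⟩
    exact hqV (by rwa [Subtype.val_injective hq])
  obtain ⟨L, hLcomp, hKL, hLC⟩ := exists_compact_between hKcomp hCclosed.isOpen_compl hKC
  set U : Set X := interior L with hU
  have hclUL : closure U ⊆ L := closure_minimal interior_subset hLcomp.isClosed
  have hx₁U : x₁ ∈ U := hKL ⟨p₁, hp₁V, rfl⟩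
  have hx₂C : x₂ ∈ C := ⟨p₂, hp₂V, rfl⟩
  have hx₂clU : x₂ ∉ closure U := fun h => hLC (hclUL h) hx₂C
  -- points of F in closure U are in U
  have hFU : ∀ x ∈ F, x ∈ closure U → x ∈ U := by
    intro x hxF hxcl
    have hxL : x ∈ L := hclUL hxcl
    have : (⟨x, hxF⟩ : F) ∈ V := by
      by_contra hv
      exact hLC hxL ⟨⟨x, hxF⟩, hv, rfl⟩
    exact hKL ⟨⟨x, hxF⟩, this, rfl⟩
  -- the boundary set
  set B : Set X := closure U \ U with hB
  have hBcomp : IsCompact B :=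
    hLcomp.of_isClosed_subset (isClosed_closure.inter isOpen_interior.isClosed_compl)
      (fun x hx => hclUL hx.1)
  have hBF : ∀ x ∈ B, dist (f x) y₀ > 0 := by
    intro x hx
    rcases hx with ⟨hxcl, hxU⟩
    have hxF : x ∉ F := fun h => hxU (hFU x h hxcl)
    have : f x ≠ y₀ := fun h => hxF (by simp [hF, h])
    exact dist_pos.2 this
  -- choose ε₀
  obtain ⟨ε₀, hε₀pos, hε₀⟩ : ∃ ε₀ : ℝ, 0 < ε₀ ∧ ∀ x ∈ B, ε₀ ≤ dist (f x) y₀ := by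
    rcases B.eq_empty_or_nonempty with hBe | hBne
    · exact ⟨1, one_pos, by simp [hBe]⟩
    · obtain ⟨z, hzB, hz⟩ := hBcomp.exists_isMinOn hBne
        ((continuous_dist.comp (hf.prodMk continuous_const)).continuousOn)
      exact ⟨dist (f z) y₀, hBF z hzB, fun x hx => hz hx⟩
  refine ⟨ε₀, hε₀pos, fun hmem => ?_⟩
  set S : Set X := f ⁻¹' Metric.ball y₀ ε₀ with hS
  have hSU : S ⊆ U ∪ (closure U)ᶜ := by
    intro x hxS
    by_cases h : x ∈ closure U
    · left
      by_contra hxU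
      exact absurd (hε₀ x ⟨h, hxU⟩) (not_le.2 (by simpa [hS] using hxS))
    · exact Or.inr h
  have hx₁S : x₁ ∈ S := by simp [hS, hx₁, Metric.mem_ball, hε₀pos]
  have hcomp : connectedComponentIn S x₁ ⊆ U :=
    isPreconnected_connectedComponentIn.subset_left_of_subset_union
      isOpen_interior isClosed_closure.isOpen_compl
      (disjoint_compl_right.mono_left subset_closure)
      ((connectedComponentIn_subset S x₁).trans hSU)
      ⟨x₁, mem_connectedComponentIn hx₁S, hx₁U⟩
  exact hx₂clU (subset_closure (hcomp hmem))
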